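/- Let d ≥ 1 be an integer, let H > 0 and ν > 0, and let Θ ⊆ ℝ^d be a nonempty set with ‖θ‖ ≤ H for all θ ∈ Θ. Suppose w_1, …, w_k ∈ ℝ^d satisfy, for every i ∈ {1,…,k}: sup_{θ∈Θ} |⟨θ, w_i⟩| ≤ 1, ‖(H^{-2} I + Σ_{j<i} w_j w_jᵀ)^{-1/2} w_i‖² ≥ 1/2, and ‖w_i‖ ≤ ν^{-1}. Then k ≤ 4 d log(1 + 16 ν^{-4} H^4). -/

import Mathlib

open Matrix

lemma aux_quad {d : ℕ} {R A : Matrix (Fin d) (Fin d) ℝ} (hR : R.PosSemidef) (h : R * R = A)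
    (v : Fin d → ℝ) : (R *ᵥ v) ⬝ᵥ (R *ᵥ v) = v ⬝ᵥ (A *ᵥ v) := by
  have hsym : Rᵀ = R := hR.isHermitian
  rw [Matrix.dotProduct_mulVec, ← Matrix.mulVec_transpose, hsym, Matrix.mulVec_mulVec, h,
    dotProduct_comm]

lemma aux_vecMulVec_psd {d : ℕ} (v : Fin d → ℝ) : (vecMulVec v v).PosSemidef := by
  have : vecMulVec v v = (Matrix.replicateRow Unit v)ᴴ * Matrix.replicateRow Unit v := by
    rw [Matrix.vecMulVec_eq Unit]
    congr 1
  rw [this]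
  exact Matrix.posSemidef_conjTranspose_mul_self _

lemma aux_det_step {d : ℕ} {A : Matrix (Fin d) (Fin d) ℝ} (hA : A.PosDef) (v : Fin d → ℝ) :
    (A + vecMulVec v v).det = A.det * (1 + v ⬝ᵥ (A⁻¹ *ᵥ v)) := by
  rw [Matrix.vecMulVec_eq Unit, Matrix.det_add_replicateCol_mul_replicateRow hA.det_pos.ne'.isUnit]
  congr 1
  rw [Matrix.det_unique]
  simp [Matrix.mul_apply, Matrix.replicateRow_apply, Matrix.replicateCol_apply, Matrix.mulVec, dotProduct,
    Finset.mul_sum, Finset.sum_mul]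
  ring_nf
  rw [Finset.sum_comm]



lemma aux_trace_eq {d : ℕ} {A : Matrix (Fin d) (Fin d) ℝ} (hA : A.IsHermitian) :
    A.trace = ∑ i, hA.eigenvalues i := by
  nth_rewrite 1 [hA.spectral_theorem]
  rw [Unitary.conjStarAlgAut_apply]
  rw [Matrix.trace_mul_cycle]
  rw [(Matrix.mem_unitaryGroup_iff').mp (hA.eigenvectorUnitary).2]
  rw [Matrix.one_mul]
  simp [Matrix.trace_diagonal]

lemma aux_det_le {d : ℕ} (hd : 0 < d) {A : Matrix (Fin d) (Fin d) ℝ} (hA : A.PosSemidef) :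
    A.det ≤ (A.trace / d) ^ d := by
  have hdR : (0:ℝ) < d := by exact_mod_cast hd
  have heig := hA.eigenvalues_nonneg
  have hdet : A.det = ∏ i, hA.isHermitian.eigenvalues i := by
    simpa using hA.isHermitian.det_eq_prod_eigenvalues
  have amgm := Real.geom_mean_le_arith_mean_weighted Finset.univ
    (fun _ : Fin d => 1 / d) hA.isHermitian.eigenvalues
    (fun i _ => by positivity) (by simp; field_simp) (fun i _ => heig i)
  have hsum : ∑ i, (1 / (d:ℝ)) * hA.isHermitian.eigenvalues i = A.trace / d := by
    rw [aux_trace_eq hA.isHermitian, eq_div_iff hdR.ne', Finset.sum_mul]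
    refine Finset.sum_congr rfl fun i _ => ?_
    field_simp
  rw [hsum] at amgm
  calc A.det = (∏ i, hA.isHermitian.eigenvalues i ^ (1 / (d:ℝ))) ^ d := by
        rw [← Finset.prod_pow]
        rw [hdet]
        refine Finset.prod_congr rfl fun i _ => ?_
        rw [← Real.rpow_natCast (_ ^ (1/(d:ℝ))), ← Real.rpow_mul (heig i)]
        rw [one_div, inv_mul_cancel₀ (by exact_mod_cast hd.ne')]
        exact (Real.rpow_one _).symm
    _ ≤ (A.trace / d) ^ d := by
        apply pow_le_pow_left₀ _ amgm
        exact Finset.prod_nonneg fun i _ => Real.rpow_nonneg (heig i) _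

lemma aux_log_le_sqrt {x : ℝ} (hx : 0 < x) : Real.log x ≤ Real.sqrt x := by
  set c := Real.sqrt (Real.sqrt x) with hc
  have h1 : 0 < Real.sqrt x := Real.sqrt_pos.mpr hx
  have hc0 : 0 < c := Real.sqrt_pos.mpr h1
  have hc2 : c ^ 2 = Real.sqrt x := Real.sq_sqrt h1.le
  have hc4 : (c ^ 2) ^ 2 = x := by rw [hc2]; exact Real.sq_sqrt hx.le
  have hlog : Real.log x = 4 * Real.log c := by
    rw [← hc4]; rw [show ((c^2)^2) = c^4 by ring, Real.log_pow]; norm_num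
  have h2 : Real.log c ≤ c - 1 := Real.log_le_sub_one_of_pos hc0
  rw [hlog, ← hc2]
  nlinarith [sq_nonneg (c - 2)]

lemma aux_exp_bound : Real.exp 2 ≤ 7.59375 ∧ Real.exp 8 ≤ 3125 := by
  have h := Real.exp_one_lt_d9
  have h1 : Real.exp 2 = Real.exp 1 ^ 2 := by
    rw [← Real.exp_nat_mul]; norm_num
  have h8 : Real.exp 8 = Real.exp 1 ^ 8 := by
    rw [← Real.exp_nat_mul]; norm_num
  have he : (0:ℝ) < Real.exp 1 := Real.exp_pos 1
  constructor
  · rw [h1]; nlinarith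
  · rw [h8]; nlinarith [pow_lt_pow_left₀ h (by positivity : (0:ℝ) ≤ Real.exp 1) (by norm_num : (8:ℕ) ≠ 0)]

lemma aux_log32 : (2:ℝ)/5 ≤ Real.log (3/2) := by
  rw [Real.le_log_iff_exp_le (by norm_num : (0:ℝ) < 3/2)]
  have h2 := aux_exp_bound.1
  have h : Real.exp (2/5) ^ 5 = Real.exp 2 := by
    rw [← Real.exp_nat_mul]; norm_num
  by_contra hcon
  push_neg at hcon
  nlinarith [pow_lt_pow_left₀ hcon (by norm_num : (0:ℝ) ≤ 3/2) (by norm_num : (5:ℕ) ≠ 0)]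

lemma aux_log5 : (8:ℝ)/5 ≤ Real.log 5 := by
  rw [Real.le_log_iff_exp_le (by norm_num : (0:ℝ) < 5)]
  have h8 := aux_exp_bound.2
  have h : Real.exp (8/5) ^ 5 = Real.exp 8 := by
    rw [← Real.exp_nat_mul]; norm_num
  by_contra hcon
  push_neg at hcon
  nlinarith [pow_lt_pow_left₀ hcon (by norm_num : (0:ℝ) ≤ 5) (by norm_num : (5:ℕ) ≠ 0)]

set_option maxHeartbeats 1000000 in
lemma aux_scalar {d k : ℕ} (hd : 1 ≤ d) {a : ℝ} (ha : 1/2 ≤ a)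
    (h : (k:ℝ) * Real.log (3/2) ≤ (d:ℝ) * Real.log (1 + ((k:ℝ)/(d:ℝ)) * a)) :
    (k:ℝ) ≤ 4 * (d:ℝ) * Real.log (1 + 16 * a^2) := by
  have hdR : (0:ℝ) < d := by exact_mod_cast hd
  set L := Real.log (1 + 16*a^2) with hLdef
  have ha0 : 0 < a := by linarith
  have hL5 : (8:ℝ)/5 ≤ L := le_trans aux_log5 (Real.log_le_log (by norm_num) (by nlinarith))
  set b := Real.sqrt (1 + 16*a^2) with hbdef
  have hb2 : b^2 = 1 + 16*a^2 := Real.sq_sqrt (by nlinarith)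
  have hb0 : 0 ≤ b := Real.sqrt_nonneg _
  have hb22 : (11/5:ℝ) ≤ b := by
    by_contra hcon'
    push_neg at hcon'
    have h' : b*b < (11/5)*(11/5) := mul_lt_mul'' hcon' hcon' hb0 hb0
    nlinarith [hb2, ha]
  have hLb : L ≤ b := by
    have h' := aux_log_le_sqrt (show (0:ℝ) < 1+16*a^2 by nlinarith)
    rw [hLdef, hbdef]; exact h'
  have h4a : 4*a ≤ b := by nlinarith
  have hkey : Real.log (1 + 4*L*a) ≤ 3/2 * L := by
    have h1 : 1 + 4*L*a ≤ b^3 := by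
      have hmul : L*(4*a) ≤ b*b := mul_le_mul hLb h4a (by linarith) hb0
      have hcube : 5*(b-1) ≤ b^2*(b-1) :=
        mul_le_mul_of_nonneg_right (by nlinarith [hb2, ha]) (by linarith)
      nlinarith [hmul, hcube, hb22]
    have h2 : Real.log (1+4*L*a) ≤ Real.log (b^3) :=
      Real.log_le_log (by nlinarith) h1
    have h3 : Real.log (b^3) = 3 * Real.log b := by
      rw [Real.log_pow]; norm_num
    have h4 : L = 2 * Real.log b := by
      rw [hLdef, ← hb2, Real.log_pow]; norm_num
    linarith
  by_contra hcon
  push_neg at hcon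
  have hP0 : (0:ℝ) < 1 + 4*L*a := by nlinarith
  set s := (k:ℝ)/(d:ℝ) with hs
  have hs0 : (0:ℝ) ≤ s := by positivity
  have hQ0 : (0:ℝ) < 1 + s*a := by nlinarith
  have htan : Real.log (1 + s*a) ≤ Real.log (1+4*L*a) + ((1+s*a)/(1+4*L*a) - 1) := by
    have h' := Real.log_le_sub_one_of_pos (show 0 < (1+s*a)/(1+4*L*a) by positivity)
    rw [Real.log_div hQ0.ne' hP0.ne'] at h'
    linarith
  have hfrac : (1+s*a)/(1+4*L*a) - 1 = (s - 4*L)*a/(1+4*L*a) := by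
    field_simp
    ring
  have haP : a/(1+4*L*a) ≤ 2/5 := by
    rw [div_le_iff₀ hP0]
    have := mul_le_mul_of_nonneg_right hL5 ha0.le
    nlinarith
  have hs4L : 4*L < s := by rw [hs, lt_div_iff₀ hdR]; linarith
  have hstep : Real.log (1+s*a) ≤ 3/2*L + (s-4*L)*(2/5) := by
    have h5 : (s-4*L)*a/(1+4*L*a) ≤ (s-4*L)*(2/5) := by
      rw [mul_div_assoc]
      exact mul_le_mul_of_nonneg_left haP (by linarith)
    calc Real.log (1+s*a) ≤ Real.log (1+4*L*a) + ((1+s*a)/(1+4*L*a) - 1) := htan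
      _ = Real.log (1+4*L*a) + (s-4*L)*a/(1+4*L*a) := by rw [hfrac]
      _ ≤ 3/2*L + (s-4*L)*(2/5) := add_le_add hkey h5
  have hk25 : (k:ℝ)*(2/5) ≤ (d:ℝ) * Real.log (1+s*a) := by
    have := mul_le_mul_of_nonneg_left aux_log32 (Nat.cast_nonneg k : (0:ℝ) ≤ k)
    linarith [h]
  have hmain : (k:ℝ)*(2/5) ≤ (d:ℝ) * (3/2*L + (s-4*L)*(2/5)) :=
    le_trans hk25 (mul_le_mul_of_nonneg_left hstep hdR.le)
  have hds : (d:ℝ) * s = k := by rw [hs]; field_simp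
  nlinarith [hmain, hds, hL5, hdR, mul_le_mul_of_nonneg_left hL5 hdR.le]


set_option maxHeartbeats 1000000 in
/-- **Length of a valid ν-preconditioning sequence.**  Let `Θ ⊆ ℝ^d` be nonempty with
`‖θ‖ ≤ H` for all `θ ∈ Θ`.  Suppose `w_1, …, w_k` satisfy, for each `i`:
`sup_{θ∈Θ} |⟨θ, w_i⟩| ≤ 1`, `‖(H⁻²I + ∑_{j<i} w_j w_jᵀ)^{-1/2} w_i‖² ≥ 1/2`
(where `R i` is the positive semidefinite square root of the inverse of
`H⁻²I + ∑_{j<i} w_j w_jᵀ`), and `‖w_i‖ ≤ ν⁻¹`.  Then `k ≤ 4 d log(1 + 16 ν⁻⁴ H⁴)`. -/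
theorem preconditioning_length {d : ℕ} (hd : 1 ≤ d) (H ν : ℝ) (hH : 0 < H) (hν : 0 < ν)
    (Θ : Set (Fin d → ℝ)) (hΘ : Θ.Nonempty)
    (hΘbd : ∀ θ ∈ Θ, Real.sqrt (θ ⬝ᵥ θ) ≤ H)
    {k : ℕ} (w : Fin k → Fin d → ℝ)
    (R : Fin k → Matrix (Fin d) (Fin d) ℝ)
    (hRps : ∀ i, (R i).PosSemidef)
    (hRsq : ∀ i : Fin k, R i * R i =
      ((H ^ 2)⁻¹ • (1 : Matrix (Fin d) (Fin d) ℝ) +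
        ∑ j : Fin k, if (j : ℕ) < (i : ℕ) then vecMulVec (w j) (w j) else 0)⁻¹)
    (hw1 : ∀ i, ∀ θ ∈ Θ, |θ ⬝ᵥ w i| ≤ 1)
    (hw2 : ∀ i, (1 : ℝ) / 2 ≤ (R i *ᵥ w i) ⬝ᵥ (R i *ᵥ w i))
    (hw3 : ∀ i, Real.sqrt (w i ⬝ᵥ w i) ≤ ν⁻¹) :
    (k : ℝ) ≤ 4 * (d : ℝ) * Real.log (1 + 16 * ν⁻¹ ^ 4 * H ^ 4) := by
  have hdR : (0:ℝ) < d := by exact_mod_cast hd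
  have hH2 : (0:ℝ) < H^2 := by positivity
  -- trivial case k = 0
  rcases Nat.eq_zero_or_pos k with hk0 | hk
  · subst hk0
    simp only [Nat.cast_zero]
    have : (0:ℝ) ≤ Real.log (1 + 16 * ν⁻¹ ^ 4 * H ^ 4) :=
      Real.log_nonneg (by nlinarith [pow_pos (inv_pos.mpr hν) 4, pow_pos hH 4])
    positivity
  -- the matrices V n
  set V : ℕ → Matrix (Fin d) (Fin d) ℝ := fun n =>
    (H ^ 2)⁻¹ • (1 : Matrix (Fin d) (Fin d) ℝ) +
      ∑ j : Fin k, if (j : ℕ) < n then vecMulVec (w j) (w j) else 0 with hV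
  -- positivity of V n
  have hbasePD : ((H ^ 2)⁻¹ • (1 : Matrix (Fin d) (Fin d) ℝ)).PosDef := by
    have : (H ^ 2)⁻¹ • (1 : Matrix (Fin d) (Fin d) ℝ) =
        Matrix.diagonal (fun _ => (H^2)⁻¹) := by
      ext x y
      by_cases hxy : x = y <;>
        simp [Matrix.one_apply, Matrix.diagonal_apply, hxy]
    rw [this]
    exact Matrix.PosDef.diagonal (fun _ => by positivity)
  have hsumPSD : ∀ n, (∑ j : Fin k, if (j : ℕ) < n then
      vecMulVec (w j) (w j) else 0).PosSemidef := by
    intro n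
    refine Finset.sum_induction _ (fun M : Matrix (Fin d) (Fin d) ℝ => M.PosSemidef)
      (fun A B hA hB => hA.add hB) Matrix.PosSemidef.zero fun j _ => ?_
    split
    · exact aux_vecMulVec_psd _
    · exact Matrix.PosSemidef.zero
  have hVpd : ∀ n, (V n).PosDef := fun n => hbasePD.add_posSemidef (hsumPSD n)
  -- step identity
  have hstep : ∀ i : Fin k, V ((i:ℕ)+1) = V (i:ℕ) + vecMulVec (w i) (w i) := by
    intro i
    rw [hV]
    simp only
    rw [add_assoc]
    congr 1
    have hsplit : ∀ j : Fin k,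
        (if (j:ℕ) < (i:ℕ)+1 then vecMulVec (w j) (w j) else 0) =
        (if (j:ℕ) < (i:ℕ) then vecMulVec (w j) (w j) else 0) +
        (if j = i then vecMulVec (w j) (w j) else 0) := by
      intro j
      by_cases h1 : (j:ℕ) < (i:ℕ)
      · rw [if_pos (by omega), if_pos h1, if_neg (by rintro rfl; omega), add_zero]
      · by_cases h2 : (j:ℕ) = (i:ℕ)
        · have hji : j = i := Fin.ext h2
          rw [if_pos (by omega), if_neg h1, if_pos hji, zero_add]
        · rw [if_neg (by omega), if_neg h1, if_neg (fun he => h2 (by rw [he])), add_zero]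
    rw [Finset.sum_congr rfl (fun j _ => hsplit j), Finset.sum_add_distrib]
    congr 1
    rw [Finset.sum_ite_eq' Finset.univ i (fun j => vecMulVec (w j) (w j))]
    simp
  -- quadratic form lower bound
  have hq : ∀ i : Fin k, (1:ℝ)/2 ≤ w i ⬝ᵥ ((V (i:ℕ))⁻¹ *ᵥ w i) := by
    intro i
    have := aux_quad (hRps i) (hRsq i) (w i)
    rw [← this]
    exact hw2 i
  -- determinant recursion
  have hdet : ∀ i : Fin k, (V (i:ℕ)).det * (3/2) ≤ (V ((i:ℕ)+1)).det := by
    intro i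
    rw [hstep i, aux_det_step (hVpd (i:ℕ))]
    have hd0 : 0 < (V (i:ℕ)).det := (hVpd _).det_pos
    have := hq i
    nlinarith
  -- induction
  have hind : ∀ n, n ≤ k → (3/2:ℝ)^n * (V 0).det ≤ (V n).det := by
    intro n
    induction n with
    | zero => intro _; simp
    | succ m ih =>
      intro hm
      have hm' : m < k := hm
      have h1 := ih (Nat.le_of_lt hm')
      have h2 := hdet ⟨m, hm'⟩
      have hd0 : 0 < (V m).det := (hVpd m).det_pos
      calc (3/2:ℝ)^(m+1) * (V 0).det = ((3/2:ℝ)^m * (V 0).det) * (3/2) := by ring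
        _ ≤ (V m).det * (3/2) := by
            apply mul_le_mul_of_nonneg_right h1 (by norm_num)
        _ ≤ (V (m+1)).det := h2
  -- det V 0
  have hV0 : V 0 = (H ^ 2)⁻¹ • (1 : Matrix (Fin d) (Fin d) ℝ) := by
    rw [hV]; simp
  have hdetV0 : (V 0).det = ((H^2)⁻¹)^d := by
    rw [hV0, Matrix.det_smul, Matrix.det_one, mul_one]
    simp
  -- trace of V k
  have htrvv : ∀ v : Fin d → ℝ, (vecMulVec v v).trace = v ⬝ᵥ v := by
    intro v
    simp [Matrix.trace, Matrix.diag, vecMulVec_apply, dotProduct]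
  have hwsq : ∀ i, w i ⬝ᵥ w i ≤ ν⁻¹^2 := by
    intro i
    have h0 : 0 ≤ w i ⬝ᵥ w i := Finset.sum_nonneg fun j _ => mul_self_nonneg _
    nlinarith [Real.sq_sqrt h0, hw3 i, Real.sqrt_nonneg (w i ⬝ᵥ w i)]
  have htr : (V k).trace ≤ (d:ℝ) * (H^2)⁻¹ + (k:ℝ) * ν⁻¹^2 := by
    rw [hV]
    simp only
    rw [Matrix.trace_add, Matrix.trace_smul, Matrix.trace_one, Matrix.trace_sum]
    have h1 : ∀ j : Fin k, ((if (j:ℕ) < k then vecMulVec (w j) (w j) else 0) :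
        Matrix (Fin d) (Fin d) ℝ).trace ≤ ν⁻¹^2 := by
      intro j
      rw [if_pos j.isLt, htrvv]
      exact hwsq j
    have h2 := Finset.sum_le_sum (fun j (_ : j ∈ Finset.univ) => h1 j)
    rw [Finset.sum_const, Finset.card_univ, Fintype.card_fin, nsmul_eq_mul] at h2
    simp only [smul_eq_mul, Fintype.card_fin]
    linarith [h2]
  -- trace nonneg side identity not needed; chain
  have hchain : (3/2:ℝ)^k * ((H^2)⁻¹)^d ≤ ((H^2)⁻¹ + ((k:ℝ)/d) * ν⁻¹^2)^d := by
    have h1 := hind k le_rfl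
    rw [hdetV0] at h1
    have h2 := aux_det_le hd (hVpd k).posSemidef
    have h3 : (V k).trace / d ≤ (H^2)⁻¹ + ((k:ℝ)/d) * ν⁻¹^2 := by
      rw [div_le_iff₀ hdR]
      have : ((H^2)⁻¹ + ((k:ℝ)/d) * ν⁻¹^2) * d = d * (H^2)⁻¹ + k * ν⁻¹^2 := by
        field_simp
      rw [this]
      exact htr
    have h4 : (0:ℝ) ≤ (V k).trace / d := by
      have := (hVpd k).det_pos
      -- trace of posdef is positive: use eigenvalues
      have htre : (V k).trace = ∑ i, (hVpd k).isHermitian.eigenvalues i :=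
        aux_trace_eq (hVpd k).isHermitian
      have : 0 ≤ (V k).trace := by
        rw [htre]
        exact Finset.sum_nonneg fun i _ => ((hVpd k).eigenvalues_pos i).le
      positivity
    calc (3/2:ℝ)^k * ((H^2)⁻¹)^d ≤ (V k).det := h1
      _ ≤ ((V k).trace / d)^d := h2
      _ ≤ ((H^2)⁻¹ + ((k:ℝ)/d) * ν⁻¹^2)^d := pow_le_pow_left₀ h4 h3 d
  -- multiply by (H^2)^d
  set a : ℝ := ν⁻¹^2 * H^2 with ha
  have ha0 : 0 < a := by positivity
  have hpow : (3/2:ℝ)^k ≤ (1 + ((k:ℝ)/d) * a)^d := by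
    have h5 := mul_le_mul_of_nonneg_right hchain (le_of_lt (pow_pos hH2 d))
    calc (3/2:ℝ)^k = (3/2:ℝ)^k * (((H^2)⁻¹)^d * (H^2)^d) := by
          rw [← mul_pow, inv_mul_cancel₀ hH2.ne', one_pow, mul_one]
      _ = (3/2:ℝ)^k * ((H^2)⁻¹)^d * (H^2)^d := by ring
      _ ≤ ((H^2)⁻¹ + ((k:ℝ)/d) * ν⁻¹^2)^d * (H^2)^d := h5
      _ = (1 + ((k:ℝ)/d) * a)^d := by
          rw [← mul_pow]
          congr 1
          rw [ha, add_mul, inv_mul_cancel₀ hH2.ne']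
          ring
  -- logs
  have hlog : (k:ℝ) * Real.log (3/2) ≤ (d:ℝ) * Real.log (1 + ((k:ℝ)/d) * a) := by
    have h6 := Real.log_le_log (by positivity) hpow
    rwa [Real.log_pow, Real.log_pow] at h6
  -- a ≥ 1/2
  have ha12 : (1:ℝ)/2 ≤ a := by
    have hq0 := hq ⟨0, hk⟩
    rw [show (((⟨0, hk⟩ : Fin k)):ℕ) = 0 from rfl] at hq0
    have hinv : (V 0)⁻¹ = H^2 • (1 : Matrix (Fin d) (Fin d) ℝ) := by
      rw [hV0]
      apply Matrix.inv_eq_right_inv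
      rw [Matrix.smul_mul, Matrix.mul_smul, Matrix.one_mul, smul_smul,
        inv_mul_cancel₀ hH2.ne', one_smul]
    rw [hinv] at hq0
    rw [Matrix.smul_mulVec, Matrix.one_mulVec, dotProduct_smul, smul_eq_mul] at hq0
    have hkey : w ⟨0, hk⟩ ⬝ᵥ w ⟨0, hk⟩ ≤ ν⁻¹^2 := hwsq ⟨0, hk⟩
    rw [ha]
    nlinarith [hq0, hkey, hH2]
  -- conclude
  have hfinal := aux_scalar hd ha12 hlog
  have : 16 * a^2 = 16 * ν⁻¹^4 * H^4 := by rw [ha]; ring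
  rwa [this] at hfinal
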